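/- arXiv:math/0001118 — 3 statements merged into one kernel-verified Lean document; each statement's English description precedes it below -/
import Mathlib

section
/- The monoid homomorphism from the free monoid on two letters L, R to the multiplicative monoid of 2×2 integer matrices, sending L to the matrix [[1,1],[0,1]] and R to the matrix [[1,0],[1,1]], is injective, and its image is exactly the set of 2×2 matrices with nonnegative integer entries and determinant 1. -/
open Matrix

/-- The generator `L = [[1,1],[0,1]]`. -/
def Lmat : Matrix (Fin 2) (Fin 2) ℤ := !![1, 1; 0, 1]

/-- The generator `R = [[1,0],[1,1]]`. -/
def Rmat : Matrix (Fin 2) (Fin 2) ℤ := !![1, 0; 1, 1]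

/-- The monoid homomorphism from the free monoid on two letters
(`false ↦ L`, `true ↦ R`) to `2 × 2` integer matrices. -/
noncomputable def wordToMat : FreeMonoid Bool →* Matrix (Fin 2) (Fin 2) ℤ :=
  FreeMonoid.lift (fun b => if b then Rmat else Lmat)

lemma Lmat_mul (M : Matrix (Fin 2) (Fin 2) ℤ) :
    Lmat * M = !![M 0 0 + M 1 0, M 0 1 + M 1 1; M 1 0, M 1 1] := by
  conv_lhs => rw [Matrix.eta_fin_two M]
  rw [Lmat, Matrix.mul_fin_two]
  ring_nf

lemma Rmat_mul (M : Matrix (Fin 2) (Fin 2) ℤ) :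
    Rmat * M = !![M 0 0, M 0 1; M 0 0 + M 1 0, M 0 1 + M 1 1] := by
  conv_lhs => rw [Matrix.eta_fin_two M]
  rw [Rmat, Matrix.mul_fin_two]
  ring_nf

lemma wordToMat_of_mul (b : Bool) (w : FreeMonoid Bool) :
    wordToMat (FreeMonoid.of b * w) = (if b then Rmat else Lmat) * wordToMat w := by
  rw [_root_.map_mul]
  congr 1

lemma wordToMat_cons (b : Bool) (l : List Bool) :
    wordToMat (FreeMonoid.ofList (b :: l)) =
      (if b then Rmat else Lmat) * wordToMat (FreeMonoid.ofList l) :=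
  wordToMat_of_mul b (FreeMonoid.ofList l)

lemma wordToMat_nonneg (w : FreeMonoid Bool) : ∀ i j, 0 ≤ wordToMat w i j := by
  induction w using FreeMonoid.inductionOn' with
  | one => intro i j; rw [_root_.map_one]; fin_cases i <;> fin_cases j <;> simp [Matrix.one_apply]
  | of_mul b w ih =>
    rw [wordToMat_of_mul]
    cases b <;> simp only [Bool.false_eq_true, if_false, if_true] <;>
      [rw [Lmat_mul]; rw [Rmat_mul]] <;>
      intro i j <;> fin_cases i <;> fin_cases j <;> simp <;>
      first
        | exact add_nonneg (ih 0 0) (ih 1 0)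
        | exact add_nonneg (ih 0 1) (ih 1 1)
        | exact ih 0 0 | exact ih 0 1 | exact ih 1 0 | exact ih 1 1

lemma wordToMat_det (w : FreeMonoid Bool) : (wordToMat w).det = 1 := by
  induction w using FreeMonoid.inductionOn' with
  | one => rw [_root_.map_one]; simp
  | of_mul b w ih =>
    rw [wordToMat_of_mul, Matrix.det_mul, ih, mul_one]
    cases b <;> simp [Lmat, Rmat, Matrix.det_fin_two_of]

lemma exists_word : ∀ n : ℕ, ∀ M : Matrix (Fin 2) (Fin 2) ℤ,
    (∀ i j, 0 ≤ M i j) → M.det = 1 →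
    (M 0 0 + M 0 1 + M 1 0 + M 1 1).toNat ≤ n → ∃ w, wordToMat w = M := by
  intro n
  induction n with
  | zero =>
    intro M hpos hdet hsum
    rw [Matrix.det_fin_two] at hdet
    have h00 := hpos 0 0; have h01 := hpos 0 1; have h10 := hpos 1 0; have h11 := hpos 1 1
    have e0 : M 0 0 = 0 := by omega
    have e1 : M 0 1 = 0 := by omega
    rw [e0, e1] at hdet
    simp at hdet
  | succ n ih =>
    intro M hpos hdet hsum
    by_cases hM : M = 1
    · exact ⟨1, by rw [_root_.map_one, hM]⟩
    rw [Matrix.det_fin_two] at hdet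
    have h00 := hpos 0 0; have h01 := hpos 0 1; have h10 := hpos 1 0; have h11 := hpos 1 1
    have key : (M 1 0 ≤ M 0 0 ∧ M 1 1 ≤ M 0 1) ∨ (M 0 0 ≤ M 1 0 ∧ M 0 1 ≤ M 1 1) := by
      by_contra hcon
      push_neg at hcon
      obtain ⟨hA, hB⟩ := hcon
      rcases lt_trichotomy (M 0 0) (M 1 0) with hac | hac | hac
      · have hd := hB hac.le
        nlinarith
      · have hx := hA hac.ge
        have hy := hB hac.le
        linarith
      · have hbd := hA hac.le
        have hbc : M 0 1 + M 1 0 ≤ 0 := by nlinarith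
        have hb0 : M 0 1 = 0 := by omega
        have hc0 : M 1 0 = 0 := by omega
        rw [hb0, hc0] at hdet
        have ha1 : M 0 0 ≤ 1 := by nlinarith
        have hd1 : M 1 1 ≤ 1 := by nlinarith
        have ha1' : M 0 0 = 1 := by nlinarith
        have hd1' : M 1 1 = 1 := by nlinarith
        exact hM (by rw [Matrix.eta_fin_two M, ha1', hb0, hc0, hd1', Matrix.one_fin_two])
    rcases key with ⟨hca, hdb⟩ | ⟨hac, hbd⟩
    · -- L case
      have hcd : 1 ≤ M 1 0 + M 1 1 := by
        by_contra hcd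
        push_neg at hcd
        have hc : M 1 0 = 0 := by omega
        have hd : M 1 1 = 0 := by omega
        rw [hc, hd] at hdet
        simp at hdet
      set N : Matrix (Fin 2) (Fin 2) ℤ :=
        !![M 0 0 - M 1 0, M 0 1 - M 1 1; M 1 0, M 1 1] with hN
      have hNpos : ∀ i j, 0 ≤ N i j := by
        intro i j; fin_cases i <;> fin_cases j <;> simp [hN] <;> omega
      have hNdet : N.det = 1 := by
        rw [hN, Matrix.det_fin_two_of]
        linear_combination hdet
      have hNsum : (N 0 0 + N 0 1 + N 1 0 + N 1 1).toNat ≤ n := by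
        simp [hN]
        omega
      obtain ⟨w, hw⟩ := ih N hNpos hNdet hNsum
      refine ⟨FreeMonoid.of false * w, ?_⟩
      rw [wordToMat_of_mul, hw]
      simp only [Bool.false_eq_true, if_false]
      rw [Lmat_mul]
      ext i j
      fin_cases i <;> fin_cases j <;> simp [hN]
    · -- R case
      have hab : 1 ≤ M 0 0 + M 0 1 := by
        by_contra hab
        push_neg at hab
        have ha : M 0 0 = 0 := by omega
        have hb : M 0 1 = 0 := by omega
        rw [ha, hb] at hdet
        simp at hdet
      set N : Matrix (Fin 2) (Fin 2) ℤ :=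
        !![M 0 0, M 0 1; M 1 0 - M 0 0, M 1 1 - M 0 1] with hN
      have hNpos : ∀ i j, 0 ≤ N i j := by
        intro i j; fin_cases i <;> fin_cases j <;> simp [hN] <;> omega
      have hNdet : N.det = 1 := by
        rw [hN, Matrix.det_fin_two_of]
        linear_combination hdet
      have hNsum : (N 0 0 + N 0 1 + N 1 0 + N 1 1).toNat ≤ n := by
        simp [hN]
        omega
      obtain ⟨w, hw⟩ := ih N hNpos hNdet hNsum
      refine ⟨FreeMonoid.of true * w, ?_⟩
      rw [wordToMat_of_mul, hw]
      simp only [if_true]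
      rw [Rmat_mul]
      ext i j
      fin_cases i <;> fin_cases j <;> simp [hN]

lemma one_ne_gen_mul (b : Bool) (t : List Bool) :
    (1 : Matrix (Fin 2) (Fin 2) ℤ) ≠
      (if b then Rmat else Lmat) * wordToMat (FreeMonoid.ofList t) := by
  intro h
  set N := wordToMat (FreeMonoid.ofList t) with hNdef
  have hpos := wordToMat_nonneg (FreeMonoid.ofList t)
  cases b
  · simp only [Bool.false_eq_true, if_false] at h
    rw [Lmat_mul] at h
    have e01 : (0 : ℤ) = N 0 1 + N 1 1 := by
      have := congrArg (fun Z : Matrix (Fin 2) (Fin 2) ℤ => Z 0 1) h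
      simpa [Matrix.one_apply] using this
    have e11 : (1 : ℤ) = N 1 1 := by
      have := congrArg (fun Z : Matrix (Fin 2) (Fin 2) ℤ => Z 1 1) h
      simpa [Matrix.one_apply] using this
    have := hpos 0 1
    linarith
  · simp only [if_true] at h
    rw [Rmat_mul] at h
    have e10 : (0 : ℤ) = N 0 0 + N 1 0 := by
      have := congrArg (fun Z : Matrix (Fin 2) (Fin 2) ℤ => Z 1 0) h
      simpa [Matrix.one_apply] using this
    have e00 : (1 : ℤ) = N 0 0 := by
      have := congrArg (fun Z : Matrix (Fin 2) (Fin 2) ℤ => Z 0 0) h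
      simpa [Matrix.one_apply] using this
    have := hpos 1 0
    linarith

lemma L_mul_ne_R_mul (t₁ t₂ : List Bool) :
    Lmat * wordToMat (FreeMonoid.ofList t₁) ≠ Rmat * wordToMat (FreeMonoid.ofList t₂) := by
  intro h
  set X := wordToMat (FreeMonoid.ofList t₁) with hX
  set Y := wordToMat (FreeMonoid.ofList t₂) with hY
  have hXpos := wordToMat_nonneg (FreeMonoid.ofList t₁)
  have hYpos := wordToMat_nonneg (FreeMonoid.ofList t₂)
  have hYdet : Y.det = 1 := wordToMat_det _
  rw [Matrix.det_fin_two] at hYdet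
  rw [Lmat_mul, Rmat_mul] at h
  have e00 : X 0 0 + X 1 0 = Y 0 0 := by
    have := congrArg (fun Z : Matrix (Fin 2) (Fin 2) ℤ => Z 0 0) h
    simpa using this
  have e01 : X 0 1 + X 1 1 = Y 0 1 := by
    have := congrArg (fun Z : Matrix (Fin 2) (Fin 2) ℤ => Z 0 1) h
    simpa using this
  have e10 : X 1 0 = Y 0 0 + Y 1 0 := by
    have := congrArg (fun Z : Matrix (Fin 2) (Fin 2) ℤ => Z 1 0) h
    simpa using this
  have e11 : X 1 1 = Y 0 1 + Y 1 1 := by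
    have := congrArg (fun Z : Matrix (Fin 2) (Fin 2) ℤ => Z 1 1) h
    simpa using this
  have hy10 : Y 1 0 = 0 := by
    have := hXpos 0 0; have := hYpos 1 0; linarith
  have hy11 : Y 1 1 = 0 := by
    have := hXpos 0 1; have := hYpos 1 1; linarith
  rw [hy10, hy11] at hYdet
  simp at hYdet

lemma Lmat_cancel {X Y : Matrix (Fin 2) (Fin 2) ℤ} (h : Lmat * X = Lmat * Y) : X = Y := by
  have hinv : (!![1, -1; 0, 1] : Matrix (Fin 2) (Fin 2) ℤ) * Lmat = 1 := by
    ext i j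
    fin_cases i <;> fin_cases j <;>
      simp [Lmat, Matrix.mul_apply, Fin.sum_univ_two, Matrix.one_apply]
  calc X = (!![1, -1; 0, 1] * Lmat) * X := by rw [hinv, one_mul]
    _ = !![1, -1; 0, 1] * (Lmat * X) := by rw [mul_assoc]
    _ = !![1, -1; 0, 1] * (Lmat * Y) := by rw [h]
    _ = (!![1, -1; 0, 1] * Lmat) * Y := by rw [mul_assoc]
    _ = Y := by rw [hinv, one_mul]

lemma Rmat_cancel {X Y : Matrix (Fin 2) (Fin 2) ℤ} (h : Rmat * X = Rmat * Y) : X = Y := by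
  have hinv : (!![1, 0; -1, 1] : Matrix (Fin 2) (Fin 2) ℤ) * Rmat = 1 := by
    ext i j
    fin_cases i <;> fin_cases j <;>
      simp [Rmat, Matrix.mul_apply, Fin.sum_univ_two, Matrix.one_apply]
  calc X = (!![1, 0; -1, 1] * Rmat) * X := by rw [hinv, one_mul]
    _ = !![1, 0; -1, 1] * (Rmat * X) := by rw [mul_assoc]
    _ = !![1, 0; -1, 1] * (Rmat * Y) := by rw [h]
    _ = (!![1, 0; -1, 1] * Rmat) * Y := by rw [mul_assoc]
    _ = Y := by rw [hinv, one_mul]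

lemma inj_aux : ∀ l₁ l₂ : List Bool,
    wordToMat (FreeMonoid.ofList l₁) = wordToMat (FreeMonoid.ofList l₂) → l₁ = l₂ := by
  intro l₁
  induction l₁ with
  | nil =>
    intro l₂ h
    cases l₂ with
    | nil => rfl
    | cons b t =>
      exfalso
      rw [wordToMat_cons] at h
      have hone : FreeMonoid.ofList ([] : List Bool) = 1 := rfl
      rw [hone, _root_.map_one] at h
      exact one_ne_gen_mul b t h
  | cons b₁ t₁ ih =>
    intro l₂ h
    cases l₂ with
    | nil =>
      exfalso
      rw [wordToMat_cons] at h
      have hone : FreeMonoid.ofList ([] : List Bool) = 1 := rfl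
      rw [hone, _root_.map_one] at h
      exact one_ne_gen_mul b₁ t₁ h.symm
    | cons b₂ t₂ =>
      rw [wordToMat_cons, wordToMat_cons] at h
      cases b₁ <;> cases b₂ <;> simp only [Bool.false_eq_true, if_false, if_true] at h
      · rw [ih t₂ (Lmat_cancel h)]
      · exact absurd h (L_mul_ne_R_mul t₁ t₂)
      · exact absurd h.symm (L_mul_ne_R_mul t₂ t₁)
      · rw [ih t₂ (Rmat_cancel h)]

theorem freeMonoid_to_SL2N_injective_and_range :
    Function.Injective wordToMat ∧
    Set.range wordToMat =
      {M : Matrix (Fin 2) (Fin 2) ℤ | (∀ i j, 0 ≤ M i j) ∧ M.det = 1} := by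
  constructor
  · intro w₁ w₂ h
    exact inj_aux (FreeMonoid.toList w₁) (FreeMonoid.toList w₂) h
  · ext M
    constructor
    · rintro ⟨w, rfl⟩
      exact ⟨wordToMat_nonneg w, wordToMat_det w⟩
    · rintro ⟨hpos, hdet⟩
      exact exists_word (M 0 0 + M 0 1 + M 1 0 + M 1 1).toNat M hpos hdet le_rfl
end

section
/- The map from SL₂(ℕ) to the positive rationals sending the matrix [[a,b],[c,d]] to (a+b)/(c+d) is a bijection. -/
open Matrix

def SL2N : Set (Matrix (Fin 2) (Fin 2) ℤ) :=
  {M | (∀ i j, 0 ≤ M i j) ∧ M.det = 1}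

def matToFrac (M : Matrix (Fin 2) (Fin 2) ℤ) : ℚ :=
  ((M 0 0 + M 0 1 : ℤ) : ℚ) / ((M 1 0 + M 1 1 : ℤ) : ℚ)

lemma pair_unique {p q a c a' c' : ℤ} (hp : 0 < p)
    (ha : 1 ≤ a) (hap : a ≤ p) (ha' : 1 ≤ a') (hap' : a' ≤ p)
    (h1 : a * q - c * p = 1) (h2 : a' * q - c' * p = 1)
    (hco : IsCoprime p q) : a = a' ∧ c = c' := by
  have hdvd : p ∣ (a - a') * q := ⟨c - c', by ring_nf; linarith⟩
  obtain ⟨k, hk⟩ := hco.dvd_of_dvd_mul_right hdvd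
  have h3 : p * k < p := by linarith
  have h4 : -p < p * k := by linarith
  have hk1 : k < 1 := by nlinarith
  have hk2 : -1 < k := by nlinarith
  have hk0 : k = 0 := by omega
  have haa : a = a' := by rw [hk0, mul_zero] at hk; linarith
  refine ⟨haa, ?_⟩
  have hcc : c * p = c' * p := by rw [haa] at h1; linarith
  exact mul_right_cancel₀ hp.ne' hcc

lemma sl2_facts {M : Matrix (Fin 2) (Fin 2) ℤ} (hM : M ∈ SL2N) :
    1 ≤ M 0 0 ∧ 0 ≤ M 0 1 ∧ 0 ≤ M 1 0 ∧ 1 ≤ M 1 1 ∧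
    M 0 0 * M 1 1 - M 0 1 * M 1 0 = 1 := by
  obtain ⟨hpos, hdet⟩ := hM
  rw [Matrix.det_fin_two] at hdet
  have h00 := hpos 0 0
  have h01 := hpos 0 1
  have h10 := hpos 1 0
  have h11 := hpos 1 1
  have hprod : 1 ≤ M 0 0 * M 1 1 := by nlinarith
  have ha : 1 ≤ M 0 0 := by nlinarith
  have hd : 1 ≤ M 1 1 := by nlinarith
  exact ⟨ha, h01, h10, hd, by linarith⟩

/-- The map `SL₂(ℕ) → ℚ₊`, `[[a,b],[c,d]] ↦ (a+b)/(c+d)`, is a bijection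
onto the set of positive rational numbers. -/
theorem SL2N_to_posRat_bijective : Set.BijOn matToFrac SL2N {q : ℚ | 0 < q} := by
  constructor
  · -- MapsTo
    intro M hM
    obtain ⟨ha, hb, hc, hd, hdet⟩ := sl2_facts hM
    have h1 : (0:ℚ) < ((M 0 0 + M 0 1 : ℤ) : ℚ) := by exact_mod_cast by linarith
    have h2 : (0:ℚ) < ((M 1 0 + M 1 1 : ℤ) : ℚ) := by exact_mod_cast by linarith
    exact div_pos h1 h2
  constructor
  · -- InjOn
    intro M hM N hN heq
    obtain ⟨ha, hb, hc, hd, hdet⟩ := sl2_facts hM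
    obtain ⟨ha', hb', hc', hd', hdet'⟩ := sl2_facts hN
    set a := M 0 0; set b := M 0 1; set c := M 1 0; set d := M 1 1
    set a' := N 0 0; set b' := N 0 1; set c' := N 1 0; set d' := N 1 1
    have hq1 : (0:ℚ) < ((c + d : ℤ) : ℚ) := by exact_mod_cast by linarith
    have hq2 : (0:ℚ) < ((c' + d' : ℤ) : ℚ) := by exact_mod_cast by linarith
    have hcross : (a + b) * (c' + d') = (a' + b') * (c + d) := by
      have := (div_eq_div_iff hq1.ne' hq2.ne').mp heq
      exact_mod_cast this
    have hco1 : IsCoprime (a + b) (c + d) := ⟨d, -b, by ring_nf; linarith⟩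
    have hco2 : IsCoprime (a' + b') (c' + d') := ⟨d', -b', by ring_nf; linarith⟩
    have hp1 : (a + b) ∣ (a' + b') := by
      refine hco1.dvd_of_dvd_mul_right ⟨c' + d', by linarith⟩
    have hp2 : (a' + b') ∣ (a + b) := by
      refine hco2.dvd_of_dvd_mul_right ⟨c + d, by linarith⟩
    have hpeq : a + b = a' + b' :=
      Int.dvd_antisymm (by linarith) (by linarith) hp1 hp2
    have hqeq : c + d = c' + d' := by
      have hne : (a + b) ≠ 0 := by linarith
      have : (a + b) * (c' + d') = (a + b) * (c + d) := by rw [hcross, hpeq]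
      exact (mul_left_cancel₀ hne this).symm
    -- now unique solution of x*(c+d) - y*(a+b) = 1
    have e1 : a * (c + d) - c * (a + b) = 1 := by ring_nf; linarith
    have e2 : a' * (c + d) - c' * (a + b) = 1 := by
      rw [hpeq, hqeq]; ring_nf; linarith
    have := pair_unique (p := a + b) (q := c + d) (by linarith)
      ha (by linarith) ha' (by linarith [hpeq]) e1 e2 hco1
    obtain ⟨haa, hcc⟩ := this
    have hbb : b = b' := by omega
    have hdd : d = d' := by omega
    ext i j
    fin_cases i <;> fin_cases j <;> assumption
  · -- SurjOn
    intro r hr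
    have hr' : 0 < r := hr
    set p : ℤ := r.num with hpdef
    set n : ℤ := (r.den : ℤ) with hndef
    have hp : 0 < p := Rat.num_pos.mpr hr'
    have hn : 0 < n := by rw [hndef]; exact_mod_cast r.pos
    have hco : IsCoprime p n := by
      rw [Int.isCoprime_iff_gcd_eq_one]
      simpa [Int.gcd, hndef] using r.reduced
    obtain ⟨u, v, huv⟩ := hco
    -- find a ≡ v mod p with 1 ≤ a ≤ p
    set k : ℤ := (v - 1) / p with hkdef
    set a : ℤ := v - p * k with hadef
    have hmod := Int.mul_ediv_add_emod (v - 1) p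
    have hmodnn := Int.emod_nonneg (v - 1) hp.ne'
    have hmodlt := Int.emod_lt_of_pos (v - 1) hp
    have ha1 : 1 ≤ a := by
      have : a - 1 = (v - 1) % p := by rw [hadef, hkdef]; linarith
      linarith [hmodnn, this]
    have hap : a ≤ p := by
      have : a - 1 = (v - 1) % p := by rw [hadef, hkdef]; linarith
      linarith [hmodlt, this]
    set c : ℤ := -u - n * k with hcdef
    have key : a * n - c * p = 1 := by rw [hadef, hcdef]; ring_nf; linarith [huv]
    have hc0 : 0 ≤ c := by nlinarith
    have hcn : c < n := by nlinarith
    refine ⟨!![a, p - a; c, n - c], ⟨?_, ?_⟩, ?_⟩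
    · intro i j
      fin_cases i <;> fin_cases j <;> simp <;> linarith
    · rw [Matrix.det_fin_two_of]; ring_nf; linarith [key]
    · show matToFrac _ = r
      have hv : matToFrac !![a, p - a; c, n - c] = ((p : ℤ) : ℚ) / ((n : ℤ) : ℚ) := by
        unfold matToFrac
        norm_num [Matrix.cons_val_zero, Matrix.cons_val_one, Matrix.head_cons]
      rw [hv, hpdef, hndef]
      push_cast
      exact Rat.num_div_den r
end

section
/- Every matrix in SL₂(ℕ) other than the identity can be written uniquely as a product of the matrices L = [[1,1],[0,1]] and R = [[1,0],[1,1]]. -/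
open Matrix

namespace SL2Naux

abbrev M2 := Matrix (Fin 2) (Fin 2) ℤ

def Good (M : M2) : Prop := ∀ i j, 0 ≤ M i j

def esum (M : M2) : ℤ := M 0 0 + M 0 1 + M 1 0 + M 1 1

lemma mul_apply' (A B : M2) (i j : Fin 2) :
    (A * B) i j = A i 0 * B 0 j + A i 1 * B 1 j := by
  simp [Matrix.mul_apply, Fin.sum_univ_two]

lemma Lmul (Q : M2) (j : Fin 2) :
    (Lmat * Q) 0 j = Q 0 j + Q 1 j ∧ (Lmat * Q) 1 j = Q 1 j := by
  constructor <;> simp [mul_apply', Lmat]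

lemma Rmul (Q : M2) (j : Fin 2) :
    (Rmat * Q) 0 j = Q 0 j ∧ (Rmat * Q) 1 j = Q 0 j + Q 1 j := by
  constructor <;> simp [mul_apply', Rmat]

lemma diag_pos (M : M2) (hg : Good M) (hd : M.det = 1) :
    1 ≤ M 0 0 ∧ 1 ≤ M 1 1 := by
  rw [Matrix.det_fin_two] at hd
  have h1 := hg 0 0; have h2 := hg 0 1; have h3 := hg 1 0; have h4 := hg 1 1
  have hbc : 0 ≤ M 0 1 * M 1 0 := mul_nonneg h2 h3
  constructor <;> nlinarith

lemma esum_ge_two (M : M2) (hg : Good M) (hd : M.det = 1) : 2 ≤ esum M := by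
  have := diag_pos M hg hd
  have := hg 0 1; have := hg 1 0
  unfold esum; linarith [this]

lemma eq_one_iff (M : M2) :
    M = 1 ↔ M 0 0 = 1 ∧ M 0 1 = 0 ∧ M 1 0 = 0 ∧ M 1 1 = 1 := by
  constructor
  · rintro rfl; norm_num [Matrix.one_apply]
  · rintro ⟨h1, h2, h3, h4⟩
    rw [Matrix.eta_fin_two M, h1, h2, h3, h4, Matrix.one_fin_two]

lemma word_good_det (l : List M2) (h : ∀ A ∈ l, A = Lmat ∨ A = Rmat) :
    Good l.prod ∧ l.prod.det = 1 := by
  induction l with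
  | nil =>
    constructor
    · intro i j
      by_cases hij : i = j <;> simp [Matrix.one_apply, hij]
    · simp
  | cons A t ih =>
    obtain ⟨hg, hd⟩ := ih (fun B hB => h B (List.mem_cons_of_mem _ hB))
    have hAg : Good A := by
      rcases h A (List.mem_cons_self) with rfl | rfl <;>
        · intro i j; fin_cases i <;> fin_cases j <;> norm_num [Lmat, Rmat]
    have hAd : A.det = 1 := by
      rcases h A (List.mem_cons_self) with rfl | rfl <;>
        norm_num [Lmat, Rmat, Matrix.det_fin_two]
    rw [List.prod_cons]
    constructor
    · intro i j
      rw [mul_apply']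
      have := mul_nonneg (hAg i 0) (hg 0 j)
      have := mul_nonneg (hAg i 1) (hg 1 j)
      linarith
    · rw [Matrix.det_mul, hAd, hd, one_mul]

lemma word_ne_one (l : List M2) (h : ∀ A ∈ l, A = Lmat ∨ A = Rmat)
    (hne : l ≠ []) : l.prod ≠ 1 := by
  cases l with
  | nil => exact absurd rfl hne
  | cons A t =>
    obtain ⟨hg, hd⟩ := word_good_det t (fun B hB => h B (List.mem_cons_of_mem _ hB))
    have h2 : 2 ≤ esum t.prod := esum_ge_two _ hg hd
    have hdp := diag_pos t.prod hg hd
    have h00 := hg 0 0; have h01 := hg 0 1; have h10 := hg 1 0; have h11 := hg 1 1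
    have h3 : 3 ≤ esum (A :: t).prod := by
      rw [List.prod_cons]
      rcases h A (List.mem_cons_self) with rfl | rfl
      · have e1 := (Lmul t.prod 0).1; have e2 := (Lmul t.prod 1).1
        have e3 := (Lmul t.prod 0).2; have e4 := (Lmul t.prod 1).2
        unfold esum at *
        rw [e1, e2, e3, e4]; linarith [hdp.2]
      · have e1 := (Rmul t.prod 0).1; have e2 := (Rmul t.prod 1).1
        have e3 := (Rmul t.prod 0).2; have e4 := (Rmul t.prod 1).2
        unfold esum at *
        rw [e1, e2, e3, e4]; linarith [hdp.1]
    intro h1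
    rw [h1] at h3
    have : esum (1 : M2) = 2 := by norm_num [esum, Matrix.one_apply]
    omega

/-- The main step lemma: if `M = G * P` with the head letter `G` forced, finish. -/
lemma build (N : ℕ)
    (IH : ∀ M : M2, Good M → M.det = 1 → M ≠ 1 → esum M ≤ (N : ℤ) →
      ∃! l : List M2, l ≠ [] ∧ (∀ A ∈ l, A = Lmat ∨ A = Rmat) ∧ l.prod = M)
    (M G P : M2) (hG : G = Lmat ∨ G = Rmat) (hMP : M = G * P)
    (hP : Good P) (hPd : P.det = 1) (hes : esum P ≤ (N : ℤ))
    (hhead : ∀ A Q : M2, (A = Lmat ∨ A = Rmat) → Good Q → Q.det = 1 → M = A * Q → A = G) :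
    ∃! l : List M2, l ≠ [] ∧ (∀ A ∈ l, A = Lmat ∨ A = Rmat) ∧ l.prod = M := by
  obtain ⟨Gi, hGi⟩ : ∃ Gi : M2, Gi * G = 1 := by
    rcases hG with rfl | rfl
    · exact ⟨!![1, -1; 0, 1], by ext i j; fin_cases i <;> fin_cases j <;>
        norm_num [Lmat, mul_apply', Matrix.one_apply]⟩
    · exact ⟨!![1, 0; -1, 1], by ext i j; fin_cases i <;> fin_cases j <;>
        norm_num [Rmat, mul_apply', Matrix.one_apply]⟩
  have cancel : ∀ Q : M2, G * Q = M → Q = P := by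
    intro Q h
    have h2 : Gi * (G * Q) = Gi * (G * P) := by rw [h, hMP]
    rwa [← mul_assoc, ← mul_assoc, hGi, one_mul, one_mul] at h2
  by_cases hP1 : P = 1
  · refine ⟨[G], ⟨by simp, by simpa using hG, by simp [hMP, hP1]⟩, ?_⟩
    rintro l ⟨hne, hmem, hprod⟩
    cases l with
    | nil => exact absurd rfl hne
    | cons A t =>
      obtain ⟨htg, htd⟩ := word_good_det t (fun B hB => hmem B (List.mem_cons_of_mem _ hB))
      have hA : A = G := hhead A t.prod (hmem A (List.mem_cons_self)) htg htd
        (by rw [← hprod, List.prod_cons])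
      subst hA
      have ht : t.prod = P := cancel _ (by rwa [← List.prod_cons])
      have htnil : t = [] := by
        by_contra h
        exact word_ne_one t (fun B hB => hmem B (List.mem_cons_of_mem _ hB)) h
          (ht.trans hP1)
      rw [htnil]
  · obtain ⟨lP, ⟨hlne, hlmem, hlprod⟩, huniq⟩ := IH P hP hPd hP1 hes
    refine ⟨G :: lP, ⟨by simp, ?_, by rw [List.prod_cons, hlprod, hMP]⟩, ?_⟩
    · intro A hA
      rcases List.mem_cons.mp hA with rfl | h
      · exact hG
      · exact hlmem A h
    · rintro l ⟨hne, hmem, hprod⟩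
      cases l with
      | nil => exact absurd rfl hne
      | cons A t =>
        obtain ⟨htg, htd⟩ := word_good_det t (fun B hB => hmem B (List.mem_cons_of_mem _ hB))
        have hA : A = G := hhead A t.prod (hmem A (List.mem_cons_self)) htg htd
          (by rw [← hprod, List.prod_cons])
        subst hA
        have ht : t.prod = P := cancel _ (by rwa [← List.prod_cons])
        have htne : t ≠ [] := by
          rintro rfl
          exact hP1 (by simpa using ht.symm)
        have := huniq t ⟨htne, fun B hB => hmem B (List.mem_cons_of_mem _ hB), ht⟩
        rw [this]

lemma main : ∀ N : ℕ, ∀ M : M2, Good M → M.det = 1 → M ≠ 1 → esum M ≤ (N : ℤ) →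
    ∃! l : List M2, l ≠ [] ∧ (∀ A ∈ l, A = Lmat ∨ A = Rmat) ∧ l.prod = M := by
  intro N
  induction N with
  | zero =>
    intro M hg hd hne hes
    have := esum_ge_two M hg hd
    norm_num at hes
    omega
  | succ N IH =>
    intro M hg hd hne hes
    set a := M 0 0 with ha
    set b := M 0 1 with hb
    set c := M 1 0 with hc
    set d := M 1 1 with hd2
    have hdet : a * d - b * c = 1 := by
      rw [ha, hb, hc, hd2, ← Matrix.det_fin_two, hd]
    have h00 := hg 0 0; have h01 := hg 0 1; have h10 := hg 1 0; have h11 := hg 1 1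
    have hdp := diag_pos M hg hd
    have hne' : ¬(a = 1 ∧ b = 0 ∧ c = 0 ∧ d = 1) := fun h => hne ((eq_one_iff M).2 h)
    -- the dichotomy
    have hdich : (c ≤ a ∧ d ≤ b) ∨ (a ≤ c ∧ b ≤ d) := by
      rcases le_or_gt c a with h1 | h1 <;> rcases le_or_gt d b with h2 | h2
      · exact Or.inl ⟨h1, h2⟩
      · -- c ≤ a, b < d
        rcases eq_or_lt_of_le h1 with heq | hlt
        · exact Or.inr ⟨heq.ge, h2.le⟩
        · exfalso
          have hb0 : b = 0 ∧ c = 0 := by constructor <;> nlinarith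
          obtain ⟨hb0, hc0⟩ := hb0
          have : a * d = 1 := by rw [← hdet, hb0, hc0]; ring
          have ha1 : a = 1 := by nlinarith
          have hd1 : d = 1 := by nlinarith
          exact hne' ⟨ha1, hb0, hc0, hd1⟩
      · -- a < c, d ≤ b
        rcases eq_or_lt_of_le h2 with heq | hlt
        · exact Or.inr ⟨h1.le, heq.ge⟩
        · exfalso; nlinarith
      · exact Or.inr ⟨h1.le, h2.le⟩
    -- the two heads cannot coexist
    have hnotboth : ¬((c ≤ a ∧ d ≤ b) ∧ (a ≤ c ∧ b ≤ d)) := by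
      rintro ⟨⟨h1, h2⟩, ⟨h3, h4⟩⟩
      have hac : a = c := le_antisymm h3 h1
      have hbd : b = d := le_antisymm h4 h2
      rw [hac, hbd] at hdet
      nlinarith
    -- facts forced by the head
    have headL : ∀ Q : M2, Good Q → M = Lmat * Q → c ≤ a ∧ d ≤ b := by
      intro Q hQ hMQ
      have e1 : a = Q 0 0 + Q 1 0 := by rw [ha, hMQ]; exact (Lmul Q 0).1
      have e2 : b = Q 0 1 + Q 1 1 := by rw [hb, hMQ]; exact (Lmul Q 1).1
      have e3 : c = Q 1 0 := by rw [hc, hMQ]; exact (Lmul Q 0).2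
      have e4 : d = Q 1 1 := by rw [hd2, hMQ]; exact (Lmul Q 1).2
      constructor
      · linarith [hQ 0 0, e1, e3]
      · linarith [hQ 0 1, e2, e4]
    have headR : ∀ Q : M2, Good Q → M = Rmat * Q → a ≤ c ∧ b ≤ d := by
      intro Q hQ hMQ
      have e1 : a = Q 0 0 := by rw [ha, hMQ]; exact (Rmul Q 0).1
      have e2 : b = Q 0 1 := by rw [hb, hMQ]; exact (Rmul Q 1).1
      have e3 : c = Q 0 0 + Q 1 0 := by rw [hc, hMQ]; exact (Rmul Q 0).2
      have e4 : d = Q 0 1 + Q 1 1 := by rw [hd2, hMQ]; exact (Rmul Q 1).2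
      constructor
      · rw [e1, e3]; linarith [hQ 1 0]
      · rw [e2, e4]; linarith [hQ 1 1]
    rcases hdich with ⟨h1, h2⟩ | ⟨h1, h2⟩
    · -- M = L * P
      set P : M2 := !![a - c, b - d; c, d] with hPdef
      have hPent : P 0 0 = a - c ∧ P 0 1 = b - d ∧ P 1 0 = c ∧ P 1 1 = d := by
        refine ⟨?_, ?_, ?_, ?_⟩ <;> simp [hPdef]
      obtain ⟨p1, p2, p3, p4⟩ := hPent
      have hPg : Good P := by
        intro i j; fin_cases i <;> fin_cases j <;> simp [hPdef] <;> linarith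
      have hPdet : P.det = 1 := by
        rw [Matrix.det_fin_two, p1, p2, p3, p4]; linarith [hdet]
      have hMP : M = Lmat * P := by
        ext i j
        fin_cases i <;> fin_cases j <;>
          simp [mul_apply', Lmat, p1, p2, p3, p4, hPdef] <;> rfl
      have hPes : esum P ≤ (N : ℤ) := by
        have hc1 : 1 ≤ c + d := by
          by_contra h
          push_neg at h
          have hc0 : c = 0 := by linarith
          have hd0 : d = 0 := by linarith
          rw [hc0, hd0] at hdet
          nlinarith
        have : esum P = esum M - (c + d) := by
          unfold esum; rw [p1, p2, p3, p4, ha, hb, hc, hd2]; ring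
        push_cast at hes ⊢
        omega
      refine build N IH M Lmat P (Or.inl rfl) hMP hPg hPdet hPes ?_
      intro A Q hA hQ hQd hMQ
      rcases hA with rfl | rfl
      · rfl
      · exfalso
        exact hnotboth ⟨⟨h1, h2⟩, headR Q hQ hMQ⟩
    · -- M = R * P
      set P : M2 := !![a, b; c - a, d - b] with hPdef
      have hPent : P 0 0 = a ∧ P 0 1 = b ∧ P 1 0 = c - a ∧ P 1 1 = d - b := by
        refine ⟨?_, ?_, ?_, ?_⟩ <;> simp [hPdef]
      obtain ⟨p1, p2, p3, p4⟩ := hPent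
      have hPg : Good P := by
        intro i j; fin_cases i <;> fin_cases j <;> simp [hPdef] <;> linarith
      have hPdet : P.det = 1 := by
        rw [Matrix.det_fin_two, p1, p2, p3, p4]; linarith [hdet]
      have hMP : M = Rmat * P := by
        ext i j
        fin_cases i <;> fin_cases j <;>
          simp [mul_apply', Rmat, p1, p2, p3, p4, hPdef] <;> rfl
      have hPes : esum P ≤ (N : ℤ) := by
        have hc1 : 1 ≤ a + b := by
          by_contra h
          push_neg at h
          have ha0 : a = 0 := by linarith
          have hb0 : b = 0 := by linarith
          rw [ha0, hb0] at hdet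
          nlinarith
        have : esum P = esum M - (a + b) := by
          unfold esum; rw [p1, p2, p3, p4, ha, hb, hc, hd2]; ring
        push_cast at hes ⊢
        omega
      refine build N IH M Rmat P (Or.inr rfl) hMP hPg hPdet hPes ?_
      intro A Q hA hQ hQd hMQ
      rcases hA with rfl | rfl
      · exfalso
        exact hnotboth ⟨headL Q hQ hMQ, ⟨h1, h2⟩⟩
      · rfl

end SL2Naux

/-- Every matrix in `SL₂(ℕ)` other than the identity is uniquely a (nonempty)
product of the matrices `L` and `R`. -/
theorem SL2N_unique_word (M : Matrix (Fin 2) (Fin 2) ℤ)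
    (hpos : ∀ i j, 0 ≤ M i j) (hdet : M.det = 1) (hne : M ≠ 1) :
    ∃! l : List (Matrix (Fin 2) (Fin 2) ℤ),
      l ≠ [] ∧ (∀ A ∈ l, A = Lmat ∨ A = Rmat) ∧ l.prod = M := by
  exact SL2Naux.main (SL2Naux.esum M).toNat M hpos hdet hne (Int.self_le_toNat _)
end
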